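/- arXiv:1901.01464 — 3 statements merged into one kernel-verified Lean document; each statement's English description precedes it below -/
import Mathlib

section
/- Let 0 < c < 1/4 and let a : ℕ × ℕ → ℝ be a nonnegative double sequence satisfying a(0,0) ≤ 1, a(0,l) ≤ c^l for all l, a(k,0) ≤ c^k for all k, and a(k,l) ≤ c·(a(k-1,l) + a(k,l-1)) + 2c·a(k-1,l-1) for all k,l ≥ 1. Then a(k,l) ≤ (4c)^(max(k,l)) for all k,l ≥ 0. -/
theorem stmt_1 (c : ℝ) (hc0 : 0 < c) (hc : c < 1/4) (a : ℕ × ℕ → ℝ)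
    (hnn : ∀ k l, 0 ≤ a (k, l))
    (h00 : a (0, 0) ≤ 1)
    (h0l : ∀ l, a (0, l) ≤ c ^ l)
    (hk0 : ∀ k, a (k, 0) ≤ c ^ k)
    (hrec : ∀ k l, 1 ≤ k → 1 ≤ l →
      a (k, l) ≤ c * (a (k - 1, l) + a (k, l - 1)) + 2 * c * a (k - 1, l - 1)) :
    ∀ k l, a (k, l) ≤ (4 * c) ^ (max k l) := by
  have h4c0 : (0:ℝ) ≤ 4 * c := by linarith
  have h4c1 : 4 * c ≤ 1 := by linarith
  have hcle : c ≤ 4 * c := by linarith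
  have key : ∀ n k l, k + l = n → a (k, l) ≤ (4 * c) ^ (max k l) := by
    intro n
    induction n using Nat.strong_induction_on with
    | _ n ih =>
      intro k l hn
      match k, l with
      | 0, l =>
        calc a (0, l) ≤ c ^ l := h0l l
          _ ≤ (4 * c) ^ l := pow_le_pow_left₀ hc0.le hcle l
          _ = (4 * c) ^ (max 0 l) := by simp
      | k+1, 0 =>
        calc a (k+1, 0) ≤ c ^ (k+1) := hk0 (k+1)
          _ ≤ (4 * c) ^ (k+1) := pow_le_pow_left₀ hc0.le hcle (k+1)
          _ = (4 * c) ^ (max (k+1) 0) := by simp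
      | k+1, l+1 =>
        set m := max k l with hm
        have e1 : max (k+1) (l+1) = m + 1 := by
          simp [hm, Nat.succ_max_succ]
        have h1 : a (k, l+1) ≤ (4*c) ^ m := by
          have := ih (k + (l+1)) (by omega) k (l+1) rfl
          refine this.trans (pow_le_pow_of_le_one h4c0 h4c1 ?_)
          omega
        have h2 : a (k+1, l) ≤ (4*c) ^ m := by
          have := ih ((k+1) + l) (by omega) (k+1) l rfl
          refine this.trans (pow_le_pow_of_le_one h4c0 h4c1 ?_)
          omega
        have h3 : a (k, l) ≤ (4*c) ^ m := ih (k + l) (by omega) k l rfl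
        have hr := hrec (k+1) (l+1) (by omega) (by omega)
        simp only [Nat.add_sub_cancel] at hr
        rw [e1]
        have hpow : (0:ℝ) ≤ (4*c) ^ m := pow_nonneg h4c0 m
        calc a (k+1, l+1) ≤ c * (a (k, l+1) + a (k+1, l)) + 2 * c * a (k, l) := hr
          _ ≤ c * ((4*c)^m + (4*c)^m) + 2 * c * (4*c)^m := by nlinarith [hnn k (l+1), hnn (k+1) l]
          _ = (4*c)^(m+1) := by ring
  intro k l
  exact key (k + l) k l rfl
end

section
/- Let (a_{k,l})_{k,l≥0} be nonnegative reals with a_{0,0} ≤ M/(1-β), a_{k,0} ≤ (2β/(1-β))^k·M/(1-β), a_{0,l} ≤ (2β/(1-β))^l·M/(1-β), and a_{k,l} ≤ (2β/(1-β))·(a_{k-1,l} + a_{k,l-1}) + (4β/(1-β))·a_{k-1,l-1} for all k,l ≥ 1, where M > 0 and 0 < β < 1/9. Then a_{k,l} ≤ (8β/(1-β))^(max(k,l))·(M/(1-β)) for all k,l ≥ 0. -/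
theorem stmt_7 (M β : ℝ) (hM : 0 < M) (hβ0 : 0 < β) (hβ1 : β < 1/9)
    (a : ℕ × ℕ → ℝ) (hnn : ∀ k l, 0 ≤ a (k, l))
    (h00 : a (0, 0) ≤ M / (1 - β))
    (hk0 : ∀ k, a (k, 0) ≤ (2 * β / (1 - β)) ^ k * (M / (1 - β)))
    (h0l : ∀ l, a (0, l) ≤ (2 * β / (1 - β)) ^ l * (M / (1 - β)))
    (hrec : ∀ k l, 1 ≤ k → 1 ≤ l →
      a (k, l) ≤ (2 * β / (1 - β)) * (a (k - 1, l) + a (k, l - 1))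
        + (4 * β / (1 - β)) * a (k - 1, l - 1)) :
    ∀ k l, a (k, l) ≤ (8 * β / (1 - β)) ^ (max k l) * (M / (1 - β)) := by
  have h1β : (0:ℝ) < 1 - β := by linarith
  set c := 2 * β / (1 - β) with hc
  set B := M / (1 - β) with hB
  have hc0 : 0 ≤ c := by positivity
  have hB0 : 0 ≤ B := by positivity
  have h4c : 8 * β / (1 - β) = 4 * c := by rw [hc]; ring
  have h4c0 : 0 ≤ 4 * c := by linarith
  have h4c1 : 4 * c ≤ 1 := by
    rw [hc]
    rw [show 4 * (2 * β / (1 - β)) = 8 * β / (1 - β) by ring, div_le_one h1β]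
    linarith
  have hcle : c ≤ 4 * c := by linarith
  have key : ∀ n k l, k + l = n → a (k, l) ≤ (4 * c) ^ (max k l) * B := by
    intro n
    induction n using Nat.strong_induction_on with
    | _ n ih =>
      intro k l hkl
      match k, l with
      | 0, l =>
        simp only [Nat.max_eq_right (Nat.zero_le l)]
        calc a (0, l) ≤ c ^ l * B := h0l l
          _ ≤ (4 * c) ^ l * B :=
            mul_le_mul_of_nonneg_right (pow_le_pow_left₀ hc0 hcle l) hB0
      | k, 0 =>
        simp only [Nat.max_eq_left (Nat.zero_le k)]
        calc a (k, 0) ≤ c ^ k * B := hk0 k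
          _ ≤ (4 * c) ^ k * B :=
            mul_le_mul_of_nonneg_right (pow_le_pow_left₀ hc0 hcle k) hB0
      | k + 1, l + 1 =>
        have hm : max (k + 1) (l + 1) = max k l + 1 := by
          simp [Nat.succ_max_succ]
        have hrec' := hrec (k + 1) (l + 1) (Nat.le_add_left 1 k) (Nat.le_add_left 1 l)
        simp only [Nat.add_sub_cancel] at hrec'
        have h4β : 4 * β / (1 - β) = 2 * c := by rw [hc]; ring
        rw [h4β] at hrec'
        have e1 : a (k, l + 1) ≤ (4 * c) ^ (max k l) * B := by
          calc a (k, l + 1) ≤ (4 * c) ^ (max k (l + 1)) * B :=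
                ih (k + (l + 1)) (by omega) k (l + 1) rfl
            _ ≤ (4 * c) ^ (max k l) * B := by
                apply mul_le_mul_of_nonneg_right _ hB0
                exact pow_le_pow_of_le_one h4c0 h4c1 (by omega)
        have e2 : a (k + 1, l) ≤ (4 * c) ^ (max k l) * B := by
          calc a (k + 1, l) ≤ (4 * c) ^ (max (k + 1) l) * B :=
                ih ((k + 1) + l) (by omega) (k + 1) l rfl
            _ ≤ (4 * c) ^ (max k l) * B := by
                apply mul_le_mul_of_nonneg_right _ hB0
                exact pow_le_pow_of_le_one h4c0 h4c1 (by omega)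
        have e3 : a (k, l) ≤ (4 * c) ^ (max k l) * B :=
          ih (k + l) (by omega) k l rfl
        rw [hm, pow_succ]
        calc a (k + 1, l + 1) ≤ c * (a (k, l + 1) + a (k + 1, l)) + 2 * c * a (k, l) :=
              hrec'
          _ ≤ c * ((4 * c) ^ (max k l) * B + (4 * c) ^ (max k l) * B)
              + 2 * c * ((4 * c) ^ (max k l) * B) := by
              gcongr
          _ = (4 * c) ^ (max k l) * (4 * c) * B := by ring
  intro k l
  rw [h4c]
  exact key (k + l) k l rfl
end

section
/- Let S be a finite set, β ∈ [0,1), and for each policy δ in a set Π let P_δ be a row-stochastic matrix on S and R_δ : S → ℝ a reward with ‖R_δ‖ ≤ M. Let v_δ be the unique fixed point of v = R_δ + β P_δ v. Then for any δ, δ' ∈ Π: ‖v_δ − v_δ'‖ ≤ (1/(1-β))·‖R_δ − R_δ'‖ + (βM/(1-β)²)·‖P_δ − P_δ'‖. -/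
theorem stmt_12 {S : Type*} [Fintype S] [Nonempty S]
    (β M : ℝ) (hβ0 : 0 ≤ β) (hβ1 : β < 1) (hM : 0 < M)
    (P P' : S → S → ℝ)
    (hPnn : ∀ i j, 0 ≤ P i j) (hProw : ∀ i, ∑ j, P i j = 1)
    (hP'nn : ∀ i j, 0 ≤ P' i j) (hP'row : ∀ i, ∑ j, P' i j = 1)
    (R R' : S → ℝ) (hR : ‖R‖ ≤ M) (hR' : ‖R'‖ ≤ M)
    (v v' : S → ℝ)
    (hv : ∀ i, v i = R i + β * ∑ j, P i j * v j)
    (hv' : ∀ i, v' i = R' i + β * ∑ j, P' i j * v' j)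
    (N : ℝ) (hN : N = Finset.univ.sup' Finset.univ_nonempty
      (fun i => ∑ j, |P i j - P' i j|)) :
    ‖v - v'‖ ≤ (1 / (1 - β)) * ‖R - R'‖ + (β * M / (1 - β) ^ 2) * N := by
  have hD : 0 < 1 - β := by linarith
  have hnorm_le : ∀ (w : S → ℝ) (i : S), |w i| ≤ ‖w‖ := fun w i => by
    simpa [Real.norm_eq_abs] using norm_le_pi_norm w i
  have key : ∀ (Q : S → S → ℝ), (∀ i j, 0 ≤ Q i j) → (∀ i, ∑ j, Q i j = 1) →
      ∀ (w : S → ℝ) (i : S), |∑ j, Q i j * w j| ≤ ‖w‖ := by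
    intro Q hQ hQr w i
    calc |∑ j, Q i j * w j| ≤ ∑ j, |Q i j * w j| := Finset.abs_sum_le_sum_abs _ _
      _ ≤ ∑ j, Q i j * ‖w‖ := by
          apply Finset.sum_le_sum; intro j _
          rw [abs_mul, abs_of_nonneg (hQ i j)]
          exact mul_le_mul_of_nonneg_left (hnorm_le w j) (hQ i j)
      _ = ‖w‖ := by rw [← Finset.sum_mul, hQr i, one_mul]
  -- bound on ‖v'‖
  have hv'b : ‖v'‖ ≤ M / (1 - β) := by
    have h2 : ‖v'‖ ≤ M + β * ‖v'‖ := by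
      apply (pi_norm_le_iff_of_nonneg (by positivity)).2
      intro i
      rw [Real.norm_eq_abs, hv' i]
      calc |R' i + β * ∑ j, P' i j * v' j|
          ≤ |R' i| + |β * ∑ j, P' i j * v' j| := abs_add_le _ _
        _ ≤ M + β * ‖v'‖ := by
            gcongr
            · exact (hnorm_le R' i).trans hR'
            · rw [abs_mul, abs_of_nonneg hβ0]
              exact mul_le_mul_of_nonneg_left (key P' hP'nn hP'row v' i) hβ0
    rw [le_div_iff₀ hD]; nlinarith [norm_nonneg v']
  have hNle : ∀ i : S, ∑ j, |P i j - P' i j| ≤ N := by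
    intro i; rw [hN]
    exact Finset.le_sup' (fun i => ∑ j, |P i j - P' i j|) (Finset.mem_univ i)
  have hN0 : 0 ≤ N := by
    obtain ⟨i⟩ := ‹Nonempty S›
    exact le_trans (Finset.sum_nonneg fun j _ => abs_nonneg _) (hNle i)
  -- main pointwise bound
  have hmain : ‖v - v'‖ ≤ ‖R - R'‖ + β * ‖v - v'‖ + β * N * (M / (1 - β)) := by
    apply (pi_norm_le_iff_of_nonneg (by positivity)).2
    intro i
    have hdecomp : (v - v') i = (R i - R' i) + β * (∑ j, P i j * (v j - v' j))
        + β * (∑ j, (P i j - P' i j) * v' j) := by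
      have : ∑ j, P i j * (v j - v' j) + ∑ j, (P i j - P' i j) * v' j
          = ∑ j, P i j * v j - ∑ j, P' i j * v' j := by
        rw [← Finset.sum_add_distrib, ← Finset.sum_sub_distrib]
        congr 1; ext j; ring
      simp only [Pi.sub_apply, hv i, hv' i]
      nlinarith [this]
    rw [Real.norm_eq_abs, hdecomp]
    have h1 : |β * (∑ j, P i j * (v j - v' j))| ≤ β * ‖v - v'‖ := by
      rw [abs_mul, abs_of_nonneg hβ0]
      have := key P hPnn hProw (v - v') i
      simp only [Pi.sub_apply] at this
      exact mul_le_mul_of_nonneg_left this hβ0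
    have h2 : |β * (∑ j, (P i j - P' i j) * v' j)| ≤ β * N * (M / (1 - β)) := by
      rw [abs_mul, abs_of_nonneg hβ0, mul_assoc]
      apply mul_le_mul_of_nonneg_left _ hβ0
      calc |∑ j, (P i j - P' i j) * v' j| ≤ ∑ j, |(P i j - P' i j) * v' j| :=
            Finset.abs_sum_le_sum_abs _ _
        _ ≤ ∑ j, |P i j - P' i j| * ‖v'‖ := by
            apply Finset.sum_le_sum; intro j _
            rw [abs_mul]
            exact mul_le_mul_of_nonneg_left (hnorm_le v' j) (abs_nonneg _)
        _ = (∑ j, |P i j - P' i j|) * ‖v'‖ := by rw [Finset.sum_mul]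
        _ ≤ N * (M / (1 - β)) := by
            apply mul_le_mul (hNle i) hv'b (norm_nonneg _) hN0
    have h3 : |R i - R' i| ≤ ‖R - R'‖ := by
      have := hnorm_le (R - R') i; simpa using this
    calc |(R i - R' i) + β * (∑ j, P i j * (v j - v' j))
        + β * (∑ j, (P i j - P' i j) * v' j)|
        ≤ |(R i - R' i) + β * (∑ j, P i j * (v j - v' j))|
          + |β * (∑ j, (P i j - P' i j) * v' j)| := abs_add_le _ _
      _ ≤ (|R i - R' i| + |β * (∑ j, P i j * (v j - v' j))|)
          + |β * (∑ j, (P i j - P' i j) * v' j)| := by gcongr; exact abs_add_le _ _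
      _ ≤ ‖R - R'‖ + β * ‖v - v'‖ + β * N * (M / (1 - β)) := by
          exact add_le_add (add_le_add h3 h1) h2
  -- conclude
  have hfinal : (1 - β) * ‖v - v'‖ ≤ ‖R - R'‖ + β * N * (M / (1 - β)) := by
    nlinarith [hmain]
  have hβM : 0 < (1 - β)^2 := by positivity
  have : ‖v - v'‖ ≤ (‖R - R'‖ + β * N * (M / (1 - β))) / (1 - β) := by
    rw [le_div_iff₀ hD]; linarith [hfinal]
  calc ‖v - v'‖ ≤ (‖R - R'‖ + β * N * (M / (1 - β))) / (1 - β) := this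
    _ = (1 / (1 - β)) * ‖R - R'‖ + (β * M / (1 - β) ^ 2) * N := by
        field_simp
end
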